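/- Assume the additive-noise utilities of Assumption 1: U i (ω) = (Y i + X ω)⁺ with Y : ι → ℝ deterministic, X : Ω → ℝ a real random variable, and ℙ(∀ i, Y i + X ≥ 0) = 1. Fix β ≥ 0, set the prices p i = c i + β, and let d : Ω → Option ι be measurable such that for every ω, d ω is user-optimal for (p, U ω). Then the expected profit equals β · max_{i ∈ ι} ℙ(U i ≥ c i + β). (Paper's Theorem 6: under the pricing p_{k,l,t} = v_{l,t} − v_{−k} + β, the expected profit is β max_{l,t} Pr(U_{k,l,t} ≥ v_{l,t} − v_{−k} + β).) -/

import Mathlib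

open Finset MeasureTheory

/-- A decision `d` is user-optimal for prices `p` and utilities `u`. -/
def userOptimal {ι : Type*} [Fintype ι] (p u : ι → ℝ) : Option ι → Prop
  | some i => 0 ≤ u i - p i ∧ ∀ j, u j - p j ≤ u i - p i
  | none => ∀ j, u j - p j < 0

/-- Profit of a decision: `p i - c i` if option `i` is accepted, `0` otherwise. -/
def profit {ι : Type*} (p c : ι → ℝ) : Option ι → ℝ
  | some i => p i - c i
  | none => 0

/-- Theorem 6 of the paper: under additive-noise utilities `U i = (Y i + X)⁺` with
`ℙ(∀ i, Y i + X ≥ 0) = 1` and the fixed-profit pricing `p i = c i + β`, the expected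
profit equals `β · max_i ℙ(U i ≥ c i + β)`. -/
theorem fixed_profit_expected_additive {ι : Type*} [Fintype ι] [Nonempty ι]
    {Ω : Type*} [MeasurableSpace Ω] (ℙ : Measure Ω) [IsProbabilityMeasure ℙ]
    (c Y : ι → ℝ) (X : Ω → ℝ) (hX : Measurable X)
    (U : Ω → ι → ℝ) (hUdef : ∀ ω i, U ω i = max (Y i + X ω) 0)
    (hpos : ℙ {ω | ∀ i, 0 ≤ Y i + X ω} = 1)
    (β : ℝ) (hβ : 0 ≤ β) (p : ι → ℝ) (hp : ∀ i, p i = c i + β)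
    (d : Ω → Option ι) (hd : ∀ o : Option ι, MeasurableSet {ω | d ω = o})
    (hopt : ∀ ω, userOptimal p (U ω) (d ω)) :
    (∫ ω, profit p c (d ω) ∂ℙ) =
      β * univ.sup' univ_nonempty (fun i => (ℙ {ω | c i + β ≤ U ω i}).toReal) := by
  classical
  set G : Set Ω := {ω | ∀ i, 0 ≤ Y i + X ω} with hGdef
  have hGm : MeasurableSet G := by
    have : G = ⋂ i, {ω | 0 ≤ Y i + X ω} := by ext ω; simp [hGdef]
    rw [this]
    exact MeasurableSet.iInter fun i =>
      measurableSet_le measurable_const (measurable_const.add hX)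
  have hGc : ℙ Gᶜ = 0 := (prob_compl_eq_zero_iff hGm).mpr hpos
  have hUG : ∀ ω ∈ G, ∀ i, U ω i = Y i + X ω := by
    intro ω hω i
    rw [hUdef ω i, max_eq_left (hω i)]
  set A : Set Ω := {ω | d ω ≠ none} with hAdef
  have hAm : MeasurableSet A := by
    have : A = {ω | d ω = none}ᶜ := by ext ω; simp [hAdef]
    rw [this]; exact (hd none).compl
  -- integral step
  have hprof : ∀ ω, profit p c (d ω) = Set.indicator A (fun _ => β) ω := by
    intro ω
    rcases h : d ω with _ | i
    · have : ω ∉ A := by simp [hAdef, h]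
      simp [profit, Set.indicator_of_notMem this]
    · have : ω ∈ A := by simp [hAdef, h]
      simp [profit, Set.indicator_of_mem this, hp]
  have hint : (∫ ω, profit p c (d ω) ∂ℙ) = β * (ℙ A).toReal := by
    simp_rw [hprof]
    rw [integral_indicator_const _ hAm]
    simp [mul_comm, measureReal_def]
  -- each event is contained in A, up to the null set Gᶜ
  have hle : ∀ i, ℙ {ω | c i + β ≤ U ω i} ≤ ℙ A := by
    intro i
    rw [← measure_inter_conull (s := {ω | c i + β ≤ U ω i}) hGc]
    refine measure_mono fun ω hω => ?_
    have hωG : ω ∈ G := hω.2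
    have hωi : c i + β ≤ U ω i := hω.1
    have hopt' := hopt ω
    rcases h : d ω with _ | j
    · rw [h] at hopt'
      have := hopt' i
      rw [hp i] at this
      exact absurd hωi (by linarith)
    · simp [hAdef, h]
  -- the argmax achieves A
  obtain ⟨i0, -, hi0⟩ := Finset.exists_max_image (univ : Finset ι)
    (fun i => Y i - c i) univ_nonempty
  have hge : ℙ A ≤ ℙ {ω | c i0 + β ≤ U ω i0} := by
    rw [← measure_inter_conull (s := A) hGc]
    refine measure_mono fun ω hω => ?_
    have hωG : ω ∈ G := hω.2
    have hopt' := hopt ω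
    rcases h : d ω with _ | j
    · exact absurd h hω.1
    · rw [h] at hopt'
      have h1 : 0 ≤ U ω j - p j := hopt'.1
      rw [hUG ω hωG j, hp j] at h1
      have h2 : Y j - c j ≤ Y i0 - c i0 := hi0 j (mem_univ j)
      show c i0 + β ≤ U ω i0
      rw [hUG ω hωG i0]
      linarith
  have hAeq : (ℙ A).toReal =
      univ.sup' univ_nonempty (fun i => (ℙ {ω | c i + β ≤ U ω i}).toReal) := by
    refine le_antisymm ?_ ?_
    · refine le_trans ?_ (Finset.le_sup' _ (mem_univ i0))
      exact ENNReal.toReal_mono (measure_ne_top ℙ _) hge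
    · refine Finset.sup'_le _ _ fun i _ => ?_
      exact ENNReal.toReal_mono (measure_ne_top ℙ _) (hle i)
  rw [hint, hAeq]
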